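/- arXiv:1108.1279 — 5 statements merged into one kernel-verified Lean document; each statement's English description precedes it below -/
import Mathlib

section
/- Hildebrandt's theorem for bounded operators: let Z be a bounded operator on a complex Hilbert space and let λ be an eigenvalue of Z lying on the topological boundary of the numerical range Num(Z). Then ker(λ − Z) = ker(conj(λ) − Z*), i.e. λ is a normal eigenvalue. -/
open scoped InnerProductSpace

/-- The numerical range of a bounded operator `Z`:
`{⟨Z f, f⟩ : ‖f‖ = 1}` (inner product linear in `Z f`). -/
def numRange {H : Type*} [NormedAddCommGroup H] [InnerProductSpace ℂ H]
    (Z : H →L[ℂ] H) : Set ℂ :=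
  {z | ∃ f : H, ‖f‖ = 1 ∧ ⟪f, Z f⟫_ℂ = z}

set_option maxHeartbeats 1000000

lemma key {H : Type*} [NormedAddCommGroup H] [InnerProductSpace ℂ H]
    [CompleteSpace H] (Z : H →L[ℂ] H) (lam : ℂ) (f₀ : H)
    (hf : ‖f₀‖ = 1) (hZ : Z f₀ = lam • f₀) (hint : lam ∉ interior (numRange Z)) :
    ContinuousLinearMap.adjoint Z f₀ = (starRingEnd ℂ) lam • f₀ := by
  by_contra hne
  set g : H := ContinuousLinearMap.adjoint Z f₀ - (starRingEnd ℂ) lam • f₀ with hgdef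
  have hg0 : g ≠ 0 := sub_ne_zero.mpr hne
  set c : ℝ := ‖g‖ with hcdef
  have hc : 0 < c := norm_pos_iff.mpr hg0
  have hself : ⟪f₀, f₀⟫_ℂ = 1 := by
    rw [inner_self_eq_norm_sq_to_K, hf]; norm_num
  have hfZf : ⟪f₀, Z f₀⟫_ℂ = lam := by
    rw [hZ, inner_smul_right, hself, mul_one]
  have hZsf : ⟪f₀, ContinuousLinearMap.adjoint Z f₀⟫_ℂ = (starRingEnd ℂ) lam := by
    rw [ContinuousLinearMap.adjoint_inner_right, hZ, inner_smul_left, hself, mul_one]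
  have hfg : ⟪f₀, g⟫_ℂ = 0 := by
    rw [hgdef, inner_sub_right, hZsf, inner_smul_right, hself, mul_one, sub_self]
  set e₂ : H := ((c : ℂ))⁻¹ • g with he2def
  have hfe2 : ⟪f₀, e₂⟫_ℂ = 0 := by
    rw [he2def, inner_smul_right, hfg, mul_zero]
  have he2f : ⟪e₂, f₀⟫_ℂ = 0 := by
    rw [← inner_conj_symm, hfe2, map_zero]
  have hgg : ⟪g, g⟫_ℂ = (c : ℂ) ^ 2 := by
    rw [inner_self_eq_norm_sq_to_K]; norm_cast
  have hcC : (c : ℂ) ≠ 0 := by exact_mod_cast hc.ne'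
  have hge2 : ⟪g, e₂⟫_ℂ = (c : ℂ) := by
    rw [he2def, inner_smul_right, hgg]
    field_simp
  have he2norm : ‖e₂‖ = 1 := by
    rw [he2def, norm_smul]
    simp only [norm_inv, Complex.norm_real, Real.norm_eq_abs, abs_of_pos hc]
    rw [← hcdef]; field_simp
  have hfZe2 : ⟪f₀, Z e₂⟫_ℂ = (c : ℂ) := by
    rw [← ContinuousLinearMap.adjoint_inner_left]
    have hfold : ContinuousLinearMap.adjoint Z f₀ = g + (starRingEnd ℂ) lam • f₀ := by
      rw [hgdef]; abel
    rw [hfold, inner_add_left, inner_smul_left, hge2, hfe2]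
    simp
  have he2Zf : ⟪e₂, Z f₀⟫_ℂ = 0 := by
    rw [hZ, inner_smul_right, he2f, mul_zero]
  set mu : ℂ := ⟪e₂, Z e₂⟫_ℂ with hmudef
  set d : ℂ := mu - lam with hddef
  set ε : ℝ := min (c ^ 2 / (32 * (‖d‖ + 1))) (c / 8) with hεdef
  have hεpos : 0 < ε := lt_min (by positivity) (by positivity)
  have hball : Metric.ball lam ε ⊆ numRange Z := by
    intro w hw
    rcases eq_or_ne w lam with rfl | hwlam
    · exact ⟨f₀, hf, hfZf⟩
    set z : ℂ := w - lam with hzdef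
    have hz0 : z ≠ 0 := sub_ne_zero.mpr hwlam
    have hzabs : 0 < ‖z‖ := by simpa using hz0
    have hzε : ‖z‖ < ε := by
      rw [Metric.mem_ball, Complex.dist_eq] at hw; exact hw
    have hz1 : ‖z‖ < c ^ 2 / (32 * (‖d‖ + 1)) :=
      lt_of_lt_of_le hzε (min_le_left _ _)
    have hz2 : ‖z‖ < c / 8 := lt_of_lt_of_le hzε (min_le_right _ _)
    have hzd : ‖z‖ * (32 * (‖d‖ + 1)) < c ^ 2 :=
      (lt_div_iff₀ (by positivity)).mp hz1
    set t₁ : ℝ := 4 * ‖z‖ / c with ht1def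
    have ht1pos : 0 < t₁ := by positivity
    have ht1half : t₁ ≤ 1 / 2 := by
      rw [ht1def, div_le_iff₀ hc]; nlinarith
    set h : ℝ → ℝ :=
      fun t => ‖z - (t : ℂ) ^ 2 * d‖ - c * t * Real.sqrt (1 - t ^ 2) with hhdef
    have hcont : ContinuousOn h (Set.Icc 0 t₁) := by
      apply Continuous.continuousOn
      apply Continuous.sub
      · exact continuous_norm.comp
          (continuous_const.sub ((Complex.continuous_ofReal.pow 2).mul continuous_const))
      · exact ((continuous_const.mul continuous_id).mul
          (Real.continuous_sqrt.comp (continuous_const.sub (continuous_pow 2))))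
    have hh0 : 0 < h 0 := by
      simp only [hhdef]
      norm_num
      exact hz0
    have hht1 : h t₁ < 0 := by
      have habsT : ‖(t₁ : ℂ)‖ = t₁ := by
        rw [Complex.norm_real, Real.norm_eq_abs, abs_of_pos ht1pos]
      have hd1 : ‖(t₁ : ℂ) ^ 2 * d‖ < ‖z‖ / 2 := by
        rw [norm_mul, norm_pow, habsT, ht1def]
        have h1 : (4 * ‖z‖ / c) ^ 2 * ‖d‖
            = 16 * ‖z‖ ^ 2 * ‖d‖ / c ^ 2 := by
          ring
        rw [h1, div_lt_iff₀ (by positivity)]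
        nlinarith [hzd, hzabs, norm_nonneg d]
      have habs : ‖z - (t₁ : ℂ) ^ 2 * d‖ < 3 / 2 * ‖z‖ := by
        have htri : ‖z - (t₁ : ℂ) ^ 2 * d‖
            ≤ ‖z‖ + ‖(t₁ : ℂ) ^ 2 * d‖ := by
          have h3 := norm_sub_le z ((t₁ : ℂ) ^ 2 * d)
          exact h3
        linarith
      have hsqrt : (1:ℝ) / 2 ≤ Real.sqrt (1 - t₁ ^ 2) := by
        nlinarith [Real.sq_sqrt (show (0:ℝ) ≤ 1 - t₁ ^ 2 by nlinarith),
          Real.sqrt_nonneg (1 - t₁ ^ 2), ht1pos, ht1half]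
      have hct1 : c * t₁ = 4 * ‖z‖ := by
        rw [ht1def]; field_simp
      have hrt : 2 * ‖z‖ ≤ c * t₁ * Real.sqrt (1 - t₁ ^ 2) := by
        rw [hct1]; nlinarith [hzabs.le]
      simp only [hhdef]
      linarith
    have h0mem : (0 : ℝ) ∈ Set.Icc (h t₁) (h 0) := ⟨le_of_lt hht1, le_of_lt hh0⟩
    obtain ⟨t, htmem, hteq⟩ := intermediate_value_Icc' (le_of_lt ht1pos) hcont h0mem
    have ht0 : 0 < t := by
      rcases lt_or_eq_of_le htmem.1 with h' | h'
      · exact h'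
      · exfalso; rw [← h'] at hteq; linarith
    have htle : t ≤ 1 / 2 := le_trans htmem.2 ht1half
    have hteq' : ‖z - (t : ℂ) ^ 2 * d‖ = c * t * Real.sqrt (1 - t ^ 2) := by
      have h2 := hteq
      simp only [hhdef] at h2
      linarith
    set a : ℝ := Real.sqrt (1 - t ^ 2) with hadef
    have hapos : 0 < a := Real.sqrt_pos.mpr (by nlinarith)
    have ha2 : a ^ 2 = 1 - t ^ 2 := Real.sq_sqrt (by nlinarith)
    set b : ℂ := (z - (t : ℂ) ^ 2 * d) / ((a : ℂ) * (c : ℂ)) with hbdef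
    have haC : (a : ℂ) ≠ 0 := by exact_mod_cast hapos.ne'
    have hac : (a : ℂ) * (c : ℂ) ≠ 0 := mul_ne_zero haC hcC
    have hbabs : ‖b‖ = t := by
      rw [hbdef, norm_div, hteq', norm_mul]
      rw [Complex.norm_real, Complex.norm_real, Real.norm_eq_abs, Real.norm_eq_abs, abs_of_pos hapos, abs_of_pos hc]
      field_simp
    have hbc : (a : ℂ) * (c : ℂ) * b = z - (t : ℂ) ^ 2 * d := by
      rw [hbdef]; field_simp
    set v : H := (a : ℂ) • f₀ + b • e₂ with hvdef
    have hvnorm : ‖v‖ = 1 := by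
      have hinner : ⟪(a : ℂ) • f₀, b • e₂⟫_ℂ = 0 := by
        rw [inner_smul_left, inner_smul_right, hfe2]; ring
      have h1 : ‖v‖ ^ 2 = 1 := by
        rw [hvdef, norm_add_sq (𝕜 := ℂ), hinner]
        simp only [map_zero, mul_zero, add_zero]
        rw [norm_smul, norm_smul, hf, he2norm, mul_one, mul_one]
        have hb' : ‖b‖ = t := hbabs
        have ha' : ‖(a : ℂ)‖ = a := by
          rw [Complex.norm_real, Real.norm_eq_abs, abs_of_pos hapos]
        rw [hb', ha']
        linarith [ha2]
      nlinarith [norm_nonneg v]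
    clear_value v b a z d mu e₂ c g
    refine ⟨v, hvnorm, ?_⟩
    have expand : ⟪v, Z v⟫_ℂ =
        (starRingEnd ℂ) (a : ℂ) * ((a : ℂ) * ⟪f₀, Z f₀⟫_ℂ + b * ⟪f₀, Z e₂⟫_ℂ)
        + (starRingEnd ℂ) b * ((a : ℂ) * ⟪e₂, Z f₀⟫_ℂ + b * ⟪e₂, Z e₂⟫_ℂ) := by
      simp only [hvdef, map_add, ContinuousLinearMap.map_smul, inner_add_left,
        inner_add_right, inner_smul_left, inner_smul_right]
      ring
    rw [expand, hfZf, hfZe2, he2Zf, ← hmudef, Complex.conj_ofReal]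
    have hcb : (starRingEnd ℂ) b * b = ((t : ℝ) : ℂ) ^ 2 := by
      rw [mul_comm, Complex.mul_conj]
      rw [← Complex.sq_norm, hbabs]
      push_cast; ring
    have haa : ((a : ℝ) : ℂ) ^ 2 = 1 - ((t : ℝ) : ℂ) ^ 2 := by
      have := ha2
      push_cast [← this]
      norm_cast
    have hz' : z = w - lam := hzdef
    have hd' : d = mu - lam := hddef
    linear_combination lam * haa + hbc + mu * hcb + hz' - ((t : ℂ)) ^ 2 * hd'
  exact hint (mem_interior.mpr ⟨Metric.ball lam ε, hball, Metric.isOpen_ball, Metric.mem_ball_self hεpos⟩)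

lemma key' {H : Type*} [NormedAddCommGroup H] [InnerProductSpace ℂ H]
    [CompleteSpace H] (Z : H →L[ℂ] H) (lam : ℂ)
    (hint : lam ∉ interior (numRange Z)) {f : H} (hZ : Z f = lam • f) :
    ContinuousLinearMap.adjoint Z f = (starRingEnd ℂ) lam • f := by
  rcases eq_or_ne f 0 with rfl | hf0
  · simp
  have hnf : (‖f‖ : ℂ) ≠ 0 := by
    exact_mod_cast (norm_pos_iff.mpr hf0).ne'
  set u : H := ((‖f‖ : ℂ))⁻¹ • f with hudef
  have hu : ‖u‖ = 1 := by
    rw [hudef, norm_smul, norm_inv, Complex.norm_real, Real.norm_eq_abs,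
      abs_of_pos (norm_pos_iff.mpr hf0)]
    field_simp
  have hZu : Z u = lam • u := by
    rw [hudef, map_smul, hZ, smul_comm]
  have hk := key Z lam u hu hZu hint
  have hfu : f = (‖f‖ : ℂ) • u := by
    rw [hudef, smul_smul, mul_inv_cancel₀ hnf, one_smul]
  calc ContinuousLinearMap.adjoint Z f
      = ContinuousLinearMap.adjoint Z ((‖f‖ : ℂ) • u) := by rw [← hfu]
    _ = (‖f‖ : ℂ) • ((starRingEnd ℂ) lam • u) := by rw [map_smul, hk]
    _ = (starRingEnd ℂ) lam • f := by rw [smul_comm, ← hfu]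

lemma numRange_adjoint {H : Type*} [NormedAddCommGroup H] [InnerProductSpace ℂ H]
    [CompleteSpace H] (Z : H →L[ℂ] H) :
    numRange (ContinuousLinearMap.adjoint Z) = (starRingEnd ℂ) ⁻¹' numRange Z := by
  ext z
  simp only [numRange, Set.mem_setOf_eq, Set.mem_preimage]
  constructor
  · rintro ⟨f, hf, hip⟩
    refine ⟨f, hf, ?_⟩
    rw [← hip, ← inner_conj_symm, ContinuousLinearMap.adjoint_inner_right]
  · rintro ⟨f, hf, hip⟩
    refine ⟨f, hf, ?_⟩
    rw [← inner_conj_symm, ContinuousLinearMap.adjoint_inner_left, hip, Complex.conj_conj]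

/-- Hildebrandt's theorem: if `λ` is an eigenvalue of a bounded operator `Z`
lying on the topological boundary of the numerical range of `Z`, then
`ker(λ − Z) = ker(conj λ − Z*)`, i.e. `λ` is a normal eigenvalue. -/
theorem stmt4 {H : Type*} [NormedAddCommGroup H] [InnerProductSpace ℂ H]
    [CompleteSpace H] (Z : H →L[ℂ] H) (lam : ℂ)
    (heig : ∃ f : H, f ≠ 0 ∧ Z f = lam • f)
    (hbd : lam ∈ frontier (numRange Z)) :
    {f : H | Z f = lam • f}
      = {f : H | ContinuousLinearMap.adjoint Z f = (starRingEnd ℂ) lam • f} := by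
  have hnotint : lam ∉ interior (numRange Z) := hbd.2
  have hadjint : (starRingEnd ℂ) lam ∉ interior (numRange (ContinuousLinearMap.adjoint Z)) := by
    rw [numRange_adjoint]
    intro hmem
    have hpre : (starRingEnd ℂ) ⁻¹' numRange Z
        = Complex.conjCLE.toHomeomorph ⁻¹' numRange Z := rfl
    rw [hpre, ← Homeomorph.preimage_interior] at hmem
    apply hnotint
    simpa using hmem
  ext f
  simp only [Set.mem_setOf_eq]
  constructor
  · intro hf
    exact key' Z lam hnotint hf
  · intro hf
    have := key' (ContinuousLinearMap.adjoint Z) ((starRingEnd ℂ) lam) hadjint hf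
    rwa [ContinuousLinearMap.adjoint_adjoint, Complex.conj_conj] at this
end

section
/- Let Z be a densely defined closed operator with Dom(Z) ⊂ Dom(Z*), and let λ be an eigenvalue of Z lying on the boundary of Num(Z). Then ker(λ − Z) ⊂ ker(conj(λ) − Z*). -/
open scoped InnerProductSpace

/-- The numerical range `{⟨T f, f⟩ : f ∈ p, ‖f‖ = 1}`. -/
def numRangeFun {H : Type*} [NormedAddCommGroup H] [InnerProductSpace ℂ H]
    (p : Submodule ℂ H) (T : p → H) : Set ℂ :=
  {z | ∃ f : p, ‖(f : H)‖ = 1 ∧ ⟪(f : H), T f⟫_ℂ = z}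

lemma cover_aux (lam a d p q s : ℂ) (ha : a ≠ 0) :
    Filter.map (fun t : ℂ => lam + (t * a + (starRingEnd ℂ) t * t * d) *
      (1 + t * q + (starRingEnd ℂ) t * p + (starRingEnd ℂ) t * t * s)⁻¹) (nhds 0)
      = nhds lam := by
  have hconj : HasStrictFDerivAt (fun t : ℂ => (starRingEnd ℂ) t)
      (Complex.conjCLE.toContinuousLinearMap) (0 : ℂ) :=
    Complex.conjCLE.toContinuousLinearMap.hasStrictFDerivAt
  have hid : HasStrictFDerivAt (fun t : ℂ => t) (ContinuousLinearMap.id ℝ ℂ) (0 : ℂ) :=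
    hasStrictFDerivAt_id 0
  have hN : HasStrictFDerivAt (fun t : ℂ => t * a + (starRingEnd ℂ) t * t * d) _ (0:ℂ) :=
    (hid.mul_const a).add ((hconj.mul hid).mul_const d)
  have hD : HasStrictFDerivAt
      (fun t : ℂ => 1 + t * q + (starRingEnd ℂ) t * p + (starRingEnd ℂ) t * t * s) _ (0:ℂ) :=
    (((hid.mul_const q).const_add 1).add (hconj.mul_const p)).add ((hconj.mul hid).mul_const s)
  have hD0 : (fun t : ℂ => 1 + t * q + (starRingEnd ℂ) t * p + (starRingEnd ℂ) t * t * s) 0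
      = 1 := by simp
  have hinv : HasStrictFDerivAt (fun z : ℂ => z⁻¹)
      ((ContinuousLinearMap.smulRight (1 : ℂ →L[ℂ] ℂ) (-(1 ^ 2)⁻¹ : ℂ)).restrictScalars ℝ)
      ((fun t : ℂ => 1 + t * q + (starRingEnd ℂ) t * p + (starRingEnd ℂ) t * t * s) 0) := by
    rw [hD0]
    exact ((hasStrictDerivAt_inv (one_ne_zero)).hasStrictFDerivAt).restrictScalars ℝ
  have hG := hinv.comp (0:ℂ) hD
  have hF := (hN.mul hG).const_add lam
  have hFe : HasStrictFDerivAt (fun t : ℂ => lam + (t * a + (starRingEnd ℂ) t * t * d) *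
      (1 + t * q + (starRingEnd ℂ) t * p + (starRingEnd ℂ) t * t * s)⁻¹)
      ((ContinuousLinearMap.id ℝ ℂ).smulRight a) (0:ℂ) := by
    refine hF.congr_fderiv ?_
    ext x
    simp [ContinuousLinearMap.smulRight_apply, mul_comm]
  have hsurj : ((ContinuousLinearMap.id ℝ ℂ).smulRight a).range = ⊤ := by
    rw [LinearMap.range_eq_top]
    intro y
    refine ⟨y * a⁻¹, ?_⟩
    simp [smul_eq_mul]
    field_simp
  have := hFe.map_nhds_eq_of_surj hsurj
  simpa using this

-- key step: for a unit eigenvector f and lam not interior to Num,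
-- ⟪f, Z g⟫ = lam * ⟪f, g⟫ for all g in the domain.
lemma key_unit {H : Type*} [NormedAddCommGroup H] [InnerProductSpace ℂ H]
    (Z : H →ₗ.[ℂ] H) (lam : ℂ)
    (hnotint : lam ∉ interior (numRangeFun Z.domain (fun f => Z f)))
    (f : Z.domain) (hf1 : ‖(f : H)‖ = 1) (hfe : Z f = lam • (f : H))
    (g : Z.domain) : ⟪(f : H), Z g⟫_ℂ = lam * ⟪(f : H), (g : H)⟫_ℂ := by
  by_contra hne
  apply hnotint
  set a : ℂ := ⟪(f : H), Z g⟫_ℂ - lam * ⟪(f : H), (g : H)⟫_ℂ with ha_def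
  have ha : a ≠ 0 := sub_ne_zero.2 hne
  set p : ℂ := ⟪(g : H), (f : H)⟫_ℂ
  set q : ℂ := ⟪(f : H), (g : H)⟫_ℂ
  set s : ℂ := ⟪(g : H), (g : H)⟫_ℂ
  set d : ℂ := ⟪(g : H), Z g⟫_ℂ - lam * s with hd_def
  set F : ℂ → ℂ := fun t => lam + (t * a + (starRingEnd ℂ) t * t * d) *
      (1 + t * q + (starRingEnd ℂ) t * p + (starRingEnd ℂ) t * t * s)⁻¹ with hF_def
  rw [mem_interior_iff_mem_nhds, ← cover_aux lam a d p q s ha, Filter.mem_map]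
  -- eventually, f + t • g ≠ 0
  have hfne : (f : H) ≠ 0 := by
    intro h; rw [h] at hf1; simp at hf1
  have hcont : Continuous (fun t : ℂ => (f : H) + t • (g : H)) := by
    continuity
  have hev : ∀ᶠ t : ℂ in nhds 0, (f : H) + t • (g : H) ≠ 0 := by
    have : {x : H | x ≠ 0} ∈ nhds ((f : H) + (0:ℂ) • (g : H)) := by
      rw [zero_smul, add_zero]
      exact IsOpen.mem_nhds isOpen_ne hfne
    exact hcont.continuousAt.eventually_mem this
  filter_upwards [hev] with t ht
  -- show F t ∈ numRangeFun
  set w : Z.domain := f + t • g with hw_def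
  have hwH : (w : H) = (f : H) + t • (g : H) := rfl
  have hwne : (w : H) ≠ 0 := by rw [hwH]; exact ht
  have hZw : Z w = lam • (f : H) + t • Z g := by
    rw [hw_def, Z.map_add, Z.map_smul, hfe]
  set n : ℝ := ‖(w : H)‖ with hn_def
  have hn : n ≠ 0 := norm_ne_zero_iff.2 hwne
  set c : ℂ := (n : ℂ)⁻¹ with hc_def
  have hcne : c ≠ 0 := by
    simp [hc_def, hn]
  set u : Z.domain := c • w with hu_def
  have huH : (u : H) = c • (w : H) := rfl
  refine ⟨u, ?_, ?_⟩
  · have hcn : ‖c‖ = n⁻¹ := by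
      rw [hc_def, norm_inv, Complex.norm_real, Real.norm_eq_abs,
        abs_of_nonneg (hn_def ▸ norm_nonneg _)]
    rw [huH, norm_smul, hcn, ← hn_def, inv_mul_cancel₀ hn]
  · have hZu : Z u = c • Z w := by rw [hu_def, Z.map_smul]
    have hinner_ww : ⟪(w : H), (w : H)⟫_ℂ = (n : ℂ) ^ 2 := by
      rw [hn_def, inner_self_eq_norm_sq_to_K]
      norm_cast
    have hD : 1 + t * q + (starRingEnd ℂ) t * p + (starRingEnd ℂ) t * t * s
        = ⟪(w : H), (w : H)⟫_ℂ := by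
      have hff : ⟪(f : H), (f : H)⟫_ℂ = 1 := by
        rw [inner_self_eq_norm_sq_to_K, hf1]; norm_num
      rw [hwH]
      simp only [inner_add_left, inner_add_right, inner_smul_left, inner_smul_right, hff]
      ring
    have hNn : t * a + (starRingEnd ℂ) t * t * d
        = ⟪(w : H), Z w⟫_ℂ - lam * ⟪(w : H), (w : H)⟫_ℂ := by
      have hff : ⟪(f : H), (f : H)⟫_ℂ = 1 := by
        rw [inner_self_eq_norm_sq_to_K, hf1]; norm_num
      have hgZf : ⟪(g : H), Z f⟫_ℂ = lam * p := by
        rw [hfe, inner_smul_right]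
      rw [hwH, hZw]
      simp only [inner_add_left, inner_add_right, inner_smul_left, inner_smul_right, hff,
        ha_def, hd_def]
      ring
    have hDne : ⟪(w : H), (w : H)⟫_ℂ ≠ 0 := by
      rw [hinner_ww]
      simpa using hn
    show ⟪(u : H), Z u⟫_ℂ = F t
    have hcc2 : (starRingEnd ℂ) c = c := by
      rw [hc_def, ← Complex.ofReal_inv, Complex.conj_ofReal]
    have hnC : (n : ℂ) ≠ 0 := by exact_mod_cast hn
    rw [huH, hZu, inner_smul_left, inner_smul_right, hcc2, hF_def]
    simp only [hD, hNn, hinner_ww, hc_def]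
    field_simp
    ring_nf

/-- Let `Z` be densely defined and closed with `Dom(Z) ⊆ Dom(Z*)`, and let `λ`
be an eigenvalue of `Z` lying on the boundary of `Num(Z)`.  Then
`ker(λ − Z) ⊆ ker(conj λ − Z*)`. -/
theorem stmt5 {H : Type*} [NormedAddCommGroup H] [InnerProductSpace ℂ H]
    [CompleteSpace H] (Z : H →ₗ.[ℂ] H)
    (hdense : Dense (Z.domain : Set H)) (hclosed : Z.IsClosed)
    (hdom : Z.domain ≤ Z.adjoint.domain) (lam : ℂ)
    (heig : ∃ f : Z.domain, (f : H) ≠ 0 ∧ Z f = lam • (f : H))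
    (hbd : lam ∈ frontier (numRangeFun Z.domain (fun f => Z f))) :
    ∀ f : Z.domain, Z f = lam • (f : H) →
      ∃ hf : (f : H) ∈ Z.adjoint.domain,
        Z.adjoint ⟨(f : H), hf⟩ = (starRingEnd ℂ) lam • (f : H) := by
  intro f hfe
  refine ⟨hdom f.2, ?_⟩
  have hnotint : lam ∉ interior (numRangeFun Z.domain (fun f => Z f)) := hbd.2
  have key : ∀ g : Z.domain, ⟪(f : H), Z g⟫_ℂ = lam * ⟪(f : H), (g : H)⟫_ℂ := by
    by_cases hf0 : (f : H) = 0
    · intro g; rw [hf0]; simp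
    · have hfn : ‖(f : H)‖ ≠ 0 := norm_ne_zero_iff.2 hf0
      set c : ℂ := ((‖(f : H)‖ : ℝ) : ℂ)⁻¹ with hc_def
      have hcne : c ≠ 0 := by simp [hc_def, hfn]
      set f' : Z.domain := c • f with hf'_def
      have hf'H : (f' : H) = c • (f : H) := rfl
      have hf'1 : ‖(f' : H)‖ = 1 := by
        rw [hf'H, norm_smul, hc_def, norm_inv, Complex.norm_real, Real.norm_eq_abs,
          abs_of_nonneg (norm_nonneg _), inv_mul_cancel₀ hfn]
      have hf'e : Z f' = lam • (f' : H) := by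
        rw [hf'_def, Z.map_smul, hfe, hf'H, smul_comm]
      intro g
      have h := key_unit Z lam hnotint f' hf'1 hf'e g
      rw [hf'H, inner_smul_left, inner_smul_left] at h
      have hcc : (starRingEnd ℂ) c ≠ 0 := by simpa using hcne
      apply mul_left_cancel₀ hcc
      rw [h]; ring
  exact Z.adjoint_apply_eq hdense _ (fun x => by
    rw [inner_smul_left, Complex.conj_conj, key x])
end

section
/- Let J = J₀ + D be the discrete Schrödinger operator on ℓ²(ℤ^ν), where (J₀u)(k) = Σ_{‖l‖₁=1} u(k+l) and (Du)(k) = d(k)u(k) for a bounded d : ℤ^ν → ℂ. If u is an eigenfunction of J, then for every j ∈ {1,…,ν}, sup{k_j : k ∈ supp(u)} = ∞ and inf{k_j : k ∈ supp(u)} = −∞. -/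
/-- The action of the discrete Schrödinger operator `J = J₀ + D` at a point
`k ∈ ℤ^ν`: `(J u)(k) = Σ_{‖l‖₁ = 1} u(k + l) + d(k) u(k)`, the sum ranging
over the `2ν` nearest neighbours. -/
noncomputable def Jact {ν : ℕ} (d : (Fin ν → ℤ) → ℂ) (u : (Fin ν → ℤ) → ℂ)
    (k : Fin ν → ℤ) : ℂ :=
  (∑ j : Fin ν, (u (k + Pi.single j 1) + u (k - Pi.single j 1))) + d k * u k

lemma key_max {ν : ℕ} (d : (Fin ν → ℤ) → ℂ) (u : (Fin ν → ℤ) → ℂ) (lam : ℂ)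
    (heig : ∀ k, Jact d u k = lam * u k) (j : Fin ν) (m : ℤ)
    (hmax : ∀ k, u k ≠ 0 → k j ≤ m) (k : Fin ν → ℤ) (hk : k j = m) : u k = 0 := by
  have hz : ∀ p : Fin ν → ℤ, m < p j → u p = 0 := by
    intro p hp
    by_contra h
    exact absurd (hmax p h) (not_le.mpr hp)
  set k' : Fin ν → ℤ := k + Pi.single j 1 with hk'
  have hk'j : k' j = m + 1 := by simp [hk', hk]
  have h := heig k'
  rw [Jact] at h
  have hsum : ∑ i : Fin ν, (u (k' + Pi.single i 1) + u (k' - Pi.single i 1))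
      = u (k' + Pi.single j 1) + u (k' - Pi.single j 1) := by
    refine Finset.sum_eq_single_of_mem j (Finset.mem_univ j) ?_
    intro i _ hij
    have h1 : u (k' + Pi.single i 1) = 0 := by
      apply hz
      simp [Pi.single_eq_of_ne hij.symm, hk'j]
    have h2 : u (k' - Pi.single i 1) = 0 := by
      apply hz
      simp [Pi.single_eq_of_ne hij.symm, hk'j]
    simp [h1, h2]
  have hplus : u (k' + Pi.single j 1) = 0 := by
    apply hz; simp [hk'j]
  have hk'0 : u k' = 0 := by apply hz; omega
  have hminus : k' - Pi.single j 1 = k := by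
    simp [hk']
  rw [hsum, hplus, hminus, hk'0] at h
  simpa using h

lemma key_min {ν : ℕ} (d : (Fin ν → ℤ) → ℂ) (u : (Fin ν → ℤ) → ℂ) (lam : ℂ)
    (heig : ∀ k, Jact d u k = lam * u k) (j : Fin ν) (m : ℤ)
    (hmin : ∀ k, u k ≠ 0 → m ≤ k j) (k : Fin ν → ℤ) (hk : k j = m) : u k = 0 := by
  have hz : ∀ p : Fin ν → ℤ, p j < m → u p = 0 := by
    intro p hp
    by_contra h
    exact absurd (hmin p h) (not_le.mpr hp)
  set k' : Fin ν → ℤ := k - Pi.single j 1 with hk'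
  have hk'j : k' j = m - 1 := by simp [hk', hk]
  have h := heig k'
  rw [Jact] at h
  have hsum : ∑ i : Fin ν, (u (k' + Pi.single i 1) + u (k' - Pi.single i 1))
      = u (k' + Pi.single j 1) + u (k' - Pi.single j 1) := by
    refine Finset.sum_eq_single_of_mem j (Finset.mem_univ j) ?_
    intro i _ hij
    have h1 : u (k' + Pi.single i 1) = 0 := by
      apply hz
      simp [Pi.single_eq_of_ne hij.symm, hk'j]
    have h2 : u (k' - Pi.single i 1) = 0 := by
      apply hz
      simp [Pi.single_eq_of_ne hij.symm, hk'j]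
    simp [h1, h2]
  have hminus : u (k' - Pi.single j 1) = 0 := by
    apply hz; simp [hk'j]
  have hk'0 : u k' = 0 := by apply hz; omega
  have hplus : k' + Pi.single j 1 = k := by
    simp [hk']
  rw [hsum, hminus, hplus, hk'0] at h
  simpa using h


/-- If `u` is an eigenfunction of `J = J₀ + D` on `ℓ²(ℤ^ν)`, then for every
coordinate direction `j`, `sup {k_j : k ∈ supp u} = ∞` and
`inf {k_j : k ∈ supp u} = −∞`. -/
theorem stmt9 {ν : ℕ} (hν : 1 ≤ ν) (d : (Fin ν → ℤ) → ℂ)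
    (hd : ∃ C, ∀ k, ‖d k‖ ≤ C)
    (u : lp (fun _ : (Fin ν → ℤ) => ℂ) 2) (hu : u ≠ 0) (lam : ℂ)
    (heig : ∀ k, Jact d (fun m => u m) k = lam * u k) :
    ∀ j : Fin ν,
      (∀ M : ℤ, ∃ k : Fin ν → ℤ, u k ≠ 0 ∧ M < k j) ∧
      (∀ M : ℤ, ∃ k : Fin ν → ℤ, u k ≠ 0 ∧ k j < M) := by
  have hex : ∃ k, u k ≠ 0 := by
    by_contra h
    push_neg at h
    exact hu (by ext k; simpa using h k)
  obtain ⟨k0, hk0⟩ := hex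
  intro j
  constructor
  · intro M
    by_contra h
    push_neg at h
    obtain ⟨m, ⟨k1, hk1, hk1j⟩, hle⟩ :=
      Int.exists_greatest_of_bdd (P := fun n => ∃ k : Fin ν → ℤ, u k ≠ 0 ∧ k j = n)
        ⟨M, fun n ⟨k, hk, hn⟩ => hn ▸ h k hk⟩ ⟨k0 j, k0, hk0, rfl⟩
    exact hk1 (key_max d (fun m => u m) lam heig j m
      (fun k hk => hle _ ⟨k, hk, rfl⟩) k1 hk1j)
  · intro M
    by_contra h
    push_neg at h
    obtain ⟨m, ⟨k1, hk1, hk1j⟩, hle⟩ :=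
      Int.exists_least_of_bdd (P := fun n => ∃ k : Fin ν → ℤ, u k ≠ 0 ∧ k j = n)
        ⟨M, fun n ⟨k, hk, hn⟩ => hn ▸ h k hk⟩ ⟨k0 j, k0, hk0, rfl⟩
    exact hk1 (key_min d (fun m => u m) lam heig j m
      (fun k hk => hle _ ⟨k, hk, rfl⟩) k1 hk1j)
end

section
/- Let J = J₀ + D on ℓ²(ℤ^ν) with bounded potential d. If Im(d(k)) → 0 as ‖k‖₁ → ∞, then every eigenvalue of J lying on the boundary of the numerical range of J is real. -/
open scoped InnerProductSpace ComplexConjugate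

/-- The numerical range of `J`. -/
noncomputable def numRangeJ {ν : ℕ} (d : (Fin ν → ℤ) → ℂ) : Set ℂ :=
  {z | ∃ u v : lp (fun _ : (Fin ν → ℤ) => ℂ) 2, ‖u‖ = 1 ∧
    (∀ k, v k = Jact d (fun m => u m) k) ∧ ⟪u, v⟫_ℂ = z}

namespace S12

variable {ν : ℕ}

noncomputable abbrev E (ν : ℕ) := lp (fun _ : (Fin ν → ℤ) => ℂ) 2

lemma jact_comb (d : (Fin ν → ℤ) → ℂ) (a b : ℂ) (x y : (Fin ν → ℤ) → ℂ) (k : Fin ν → ℤ) :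
    Jact d (fun m => a * x m + b * y m) k = a * Jact d x k + b * Jact d y k := by
  simp only [Jact, mul_add, Finset.mul_sum, ← Finset.sum_add_distrib]
  have h : ∀ j : Fin ν, a * x (k + Pi.single j 1) + b * y (k + Pi.single j 1) +
      (a * x (k - Pi.single j 1) + b * y (k - Pi.single j 1)) =
      (a * x (k + Pi.single j 1) + a * x (k - Pi.single j 1)) +
      (b * y (k + Pi.single j 1) + b * y (k - Pi.single j 1)) := fun j => by ring
  simp only [h, Finset.sum_add_distrib]
  ring

lemma single_apply' (i j : Fin ν → ℤ) (a : ℂ) :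
    (lp.single 2 i a : E ν) j = if j = i then a else 0 := by
  rw [lp.single_apply]
  split_ifs with h
  · subst h; simp
  · simp [h]

noncomputable def Jsingle (d : (Fin ν → ℤ) → ℂ) (k : Fin ν → ℤ) : E ν :=
  (∑ j : Fin ν, (lp.single 2 (k - Pi.single j 1) (1:ℂ) + lp.single 2 (k + Pi.single j 1) (1:ℂ)))
    + lp.single 2 k (d k)

lemma Jsingle_apply (d : (Fin ν → ℤ) → ℂ) (k m : Fin ν → ℤ) :
    (Jsingle d k : ∀ _ : Fin ν → ℤ, ℂ) m
      = Jact d (fun x => (lp.single 2 k (1:ℂ) : E ν) x) m := by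
  simp only [Jsingle, lp.coeFn_add, lp.coeFn_sum, Finset.sum_apply, Pi.add_apply,
    single_apply', Jact]
  congr 1
  · apply Finset.sum_congr rfl
    intro j _
    congr 1
    · congr 1
      simp [eq_sub_iff_add_eq]
    · congr 1
      simp [sub_eq_iff_eq_add]
  · by_cases h : m = k <;> simp [h]


lemma inner_Jsingle (d : (Fin ν → ℤ) → ℂ) (f : E ν) (k : Fin ν → ℤ) :
    ⟪f, Jsingle d k⟫_ℂ = (∑ j : Fin ν, (conj (f (k - Pi.single j 1)) + conj (f (k + Pi.single j 1))))
      + conj (f k) * d k := by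
  simp only [Jsingle, inner_add_right, inner_sum, lp.inner_single_right, RCLike.inner_apply,
    mul_one, one_mul]
  ring


set_option maxHeartbeats 2000000 in
lemma key (d : (Fin ν → ℤ) → ℂ) (lam : ℂ) (u : E ν) (hu1 : ‖u‖ = 1)
    (heig : ∀ k, Jact d (fun m => u m) k = lam * u k)
    (hbd : lam ∉ interior (numRangeJ d))
    (w W : E ν) (hW : ∀ k, (W : ∀ _, ℂ) k = Jact d (fun m => w m) k)
    (hortho : ⟪u, w⟫_ℂ = 0) :
    ⟪u, W⟫_ℂ = 0 := by
  by_contra ha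
  set a := ⟪u, W⟫_ℂ with ha_def
  set b := ⟪w, W⟫_ℂ with hb_def
  set c := b - lam * (‖w‖ : ℂ)^2 with hc_def
  have hmem : ∀ t : ℂ, (lam + t * a + (‖t‖:ℂ)^2 * b) / (1 + (‖t‖:ℂ)^2 * (‖w‖:ℂ)^2)
      ∈ numRangeJ d := by
    intro t
    set n : ℝ := ‖u + t • w‖ with hn_def
    have hn2 : n ^ 2 = 1 + ‖t‖^2 * ‖w‖^2 := by
      rw [hn_def, norm_add_sq (𝕜 := ℂ), inner_smul_right, hortho, norm_smul, hu1]
      simp [mul_pow]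
    have hnpos : 0 < n := by nlinarith [norm_nonneg (u + t • w), norm_nonneg t, norm_nonneg w, sq_nonneg (‖t‖ * ‖w‖)]
    have hnC : ((n:ℂ)) ≠ 0 := by exact_mod_cast (Complex.ofReal_ne_zero).2 hnpos.ne'
    refine ⟨((n:ℂ)⁻¹) • (u + t • w), ((n:ℂ)⁻¹) • (lam • u + t • W), ?_, ?_, ?_⟩
    · rw [norm_smul, ← hn_def]
      simp [abs_of_pos hnpos, inv_mul_cancel₀ hnpos.ne']
    · intro k
      have hfun : (fun m => (((n:ℂ)⁻¹) • (u + t • w) : E ν) m) =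
          fun m => ((n:ℂ)⁻¹) * (u : ∀ _, ℂ) m + ((n:ℂ)⁻¹ * t) * (w : ∀ _, ℂ) m := by
        funext m
        simp only [lp.coeFn_smul, lp.coeFn_add, Pi.smul_apply, Pi.add_apply, smul_eq_mul]
        ring
      rw [hfun, jact_comb, heig k, ← hW k]
      simp only [lp.coeFn_smul, lp.coeFn_add, Pi.smul_apply, Pi.add_apply, smul_eq_mul]
      ring
    · simp only [inner_smul_left, inner_smul_right, inner_add_left, inner_add_right,
        inner_self_eq_norm_sq_to_K, ← ha_def, ← hb_def]
      have h1 : ⟪w, u⟫_ℂ = 0 := by rw [← inner_conj_symm, hortho, map_zero]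
      rw [h1, hu1]
      have h2 : (starRingEnd ℂ) t * t = ((‖t‖:ℂ))^2 := by
        rw [RCLike.conj_mul]; norm_cast
      have h3 : (starRingEnd ℂ) ((n:ℂ)⁻¹) = (n:ℂ)⁻¹ := by
        rw [map_inv₀, Complex.conj_ofReal]
      rw [h3]
      have h4 : ((n:ℂ)) * ((n:ℂ)) = (1:ℂ) + (‖t‖:ℂ)^2 * (‖w‖:ℂ)^2 := by
        have h5 : ((n:ℂ)) * ((n:ℂ)) = ((n^2 : ℝ) : ℂ) := by push_cast; ring
        rw [h5, hn2]; push_cast; ring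
      have hden : ((1:ℂ) + (‖t‖:ℂ)^2 * (‖w‖:ℂ)^2) ≠ 0 := by
        rw [← h4]; exact mul_ne_zero hnC hnC
      rw [eq_div_iff hden, ← h4, ← h2]
      field_simp
      push_cast; ring
  have hapos : 0 < ‖a‖ := norm_pos_iff.2 ha
  set r1 : ℝ := min 1 (‖a‖ / (2 * (‖c‖ + 1))) with hr1_def
  have hr1pos : 0 < r1 := lt_min one_pos (by positivity)
  have hr1le1 : r1 ≤ 1 := min_le_left _ _
  have hr1c : r1 * ‖c‖ ≤ ‖a‖ / 2 := by
    have h := min_le_right 1 (‖a‖ / (2 * (‖c‖ + 1)))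
    calc r1 * ‖c‖ ≤ (‖a‖ / (2 * (‖c‖ + 1))) * ‖c‖ :=
          mul_le_mul_of_nonneg_right h (norm_nonneg c)
      _ ≤ ‖a‖ / 2 := by
          rw [div_mul_eq_mul_div, div_le_div_iff₀ (by positivity) (by norm_num)]
          nlinarith [norm_nonneg c, hapos]
  set m : ℝ := r1 * ‖a‖ / (4 * (1 + ‖w‖^2)) with hm_def
  have hmpos : 0 < m := by positivity
  apply hbd
  rw [mem_interior]
  refine ⟨Metric.ball lam m, ?_, Metric.isOpen_ball, Metric.mem_ball_self hmpos⟩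
  intro z hz
  rw [Metric.mem_ball, dist_eq_norm] at hz
  by_cases hzl : z = lam
  · subst hzl
    simpa using hmem 0
  · set G : ℝ → ℝ := fun r =>
      ‖((1 + r^2 * ‖w‖^2 : ℝ) : ℂ) * (z - lam) - ((r^2 : ℝ) : ℂ) * c‖ - r * ‖a‖ with hG_def
    have hGcont : ContinuousOn G (Set.Icc 0 r1) := by
      apply Continuous.continuousOn
      fun_prop
    have hG0 : 0 < G 0 := by
      simp only [hG_def]
      norm_num
      exact sub_ne_zero.2 hzl
    have hzm : ‖z - lam‖ * (4 * (1 + ‖w‖^2)) < r1 * ‖a‖ := by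
      rw [← lt_div_iff₀ (by positivity)]
      exact hz
    have hGr1 : G r1 < 0 := by
      have hb1 : ‖((1 + r1^2 * ‖w‖^2 : ℝ) : ℂ) * (z - lam) - ((r1^2 : ℝ) : ℂ) * c‖
          ≤ (1 + r1^2 * ‖w‖^2) * ‖z - lam‖ + r1^2 * ‖c‖ := by
        calc ‖((1 + r1^2 * ‖w‖^2 : ℝ) : ℂ) * (z - lam) - ((r1^2 : ℝ) : ℂ) * c‖
            ≤ ‖((1 + r1^2 * ‖w‖^2 : ℝ) : ℂ) * (z - lam)‖ + ‖((r1^2 : ℝ) : ℂ) * c‖ :=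
              norm_sub_le _ _
          _ = (1 + r1^2 * ‖w‖^2) * ‖z - lam‖ + r1^2 * ‖c‖ := by
              rw [norm_mul, norm_mul, Complex.norm_real, Complex.norm_real,
                Real.norm_eq_abs, Real.norm_eq_abs,
                abs_of_pos (by positivity : (0:ℝ) < 1 + r1^2*‖w‖^2),
                abs_of_nonneg (sq_nonneg r1)]
      have hr1sq : r1^2 ≤ 1 := by nlinarith
      have hterm : r1^2 * ‖w‖^2 * ‖z - lam‖ ≤ ‖w‖^2 * ‖z - lam‖ := by
        nlinarith [mul_nonneg (mul_nonneg (by linarith : (0:ℝ) ≤ 1 - r1^2) (sq_nonneg ‖w‖))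
          (norm_nonneg (z - lam))]
      have hterm2 : r1^2 * ‖c‖ ≤ r1 * (‖a‖/2) := by
        nlinarith [mul_le_mul_of_nonneg_left hr1c hr1pos.le]
      simp only [hG_def]
      nlinarith [norm_nonneg (z - lam), mul_pos hr1pos hapos]
    obtain ⟨r, hrIcc, hGr⟩ := intermediate_value_Icc' hr1pos.le hGcont ⟨hGr1.le, hG0.le⟩
    have hnum : ‖((1 + r^2 * ‖w‖^2 : ℝ) : ℂ) * (z - lam) - ((r^2 : ℝ) : ℂ) * c‖ = r * ‖a‖ := by
      have h := hGr
      simp only [hG_def] at h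
      linarith
    set t : ℂ := (((1 + r^2 * ‖w‖^2 : ℝ) : ℂ) * (z - lam) - ((r^2 : ℝ) : ℂ) * c) / a with ht_def
    have hta : t * a = ((1 + r^2 * ‖w‖^2 : ℝ) : ℂ) * (z - lam) - ((r^2 : ℝ) : ℂ) * c := by
      rw [ht_def, div_mul_cancel₀ _ ha]
    have htn : ‖t‖ = r := by
      rw [ht_def, norm_div, hnum]
      exact mul_div_cancel_right₀ r hapos.ne'
    have hval := hmem t
    have heq : (lam + t * a + (‖t‖:ℂ)^2 * b) / (1 + (‖t‖:ℂ)^2 * (‖w‖:ℂ)^2) = z := by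
      rw [htn, hta, hc_def]
      have hcast : ((1:ℂ) + ((r:ℝ):ℂ)^2 * (‖w‖:ℂ)^2) = ((1 + r^2*‖w‖^2 : ℝ):ℂ) := by
        push_cast; ring
      have hden : ((1:ℂ) + ((r:ℝ):ℂ)^2 * (‖w‖:ℂ)^2) ≠ 0 := by
        rw [hcast]
        exact_mod_cast (by positivity : (0:ℝ) < 1 + r^2*‖w‖^2).ne'
      rw [div_eq_iff hden]
      push_cast
      ring
    rw [heq] at hval
    exact hval


lemma jact_smul (d : (Fin ν → ℤ) → ℂ) (a : ℂ) (x : (Fin ν → ℤ) → ℂ) (k : Fin ν → ℤ) :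
    Jact d (fun m => a * x m) k = a * Jact d x k := by
  simp only [Jact, Finset.mul_sum, mul_add]
  ring

theorem main {ν : ℕ} (hν : 1 ≤ ν) (d : (Fin ν → ℤ) → ℂ)
    (hlim : ∀ ε > 0, ∃ N : ℕ, ∀ k : Fin ν → ℤ,
      (N : ℤ) ≤ ∑ j, |k j| → |(d k).im| < ε)
    (lam : ℂ) (u : lp (fun _ : (Fin ν → ℤ) => ℂ) 2) (hu : u ≠ 0)
    (heig : ∀ k, Jact d (fun m => u m) k = lam * u k)
    (hbd : lam ∈ frontier (numRangeJ d)) :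
    lam.im = 0 := by
  classical
  have hnu : ‖u‖ ≠ 0 := norm_ne_zero_iff.2 hu
  set u' : E ν := ((‖u‖ : ℂ)⁻¹) • u with hu'_def
  have hcoe : ∀ k, (u' : ∀ _, ℂ) k = (‖u‖:ℂ)⁻¹ * u k := by
    intro k; rw [hu'_def, lp.coeFn_smul]; simp
  have hu'1 : ‖u'‖ = 1 := by
    rw [hu'_def, norm_smul, norm_inv, Complex.norm_real, Real.norm_eq_abs,
      abs_of_nonneg (norm_nonneg u)]
    exact inv_mul_cancel₀ hnu
  have heig' : ∀ k, Jact d (fun m => u' m) k = lam * u' k := by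
    intro k
    have hfun : (fun m => (u' : ∀ _, ℂ) m) = fun m => (‖u‖:ℂ)⁻¹ * (u : ∀ _, ℂ) m := by
      funext m; exact hcoe m
    rw [hfun, jact_smul, heig k, hcoe k]
    ring
  have hbd' : lam ∉ interior (numRangeJ d) := hbd.2
  have hkey : ∀ k : Fin ν → ℤ,
      (d k - conj (d k)) * (u' : ∀ _, ℂ) k = (lam - conj lam) * (u' : ∀ _, ℂ) k := by
    intro k
    set ck : ℂ := conj ((u' : ∀ _, ℂ) k) with hck
    have hin_u'u' : ⟪u', u'⟫_ℂ = 1 := by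
      rw [inner_self_eq_norm_sq_to_K, hu'1]; norm_num
    have hin_single : ⟪u', lp.single 2 k (1:ℂ)⟫_ℂ = ck := by
      rw [lp.inner_single_right, RCLike.inner_apply, one_mul, hck]
    set w : E ν := lp.single 2 k (1:ℂ) - ck • u' with hw
    set W : E ν := Jsingle d k - ck • (lam • u') with hW0
    have hW : ∀ m, (W : ∀ _, ℂ) m = Jact d (fun x => w x) m := by
      intro m
      have hfun : (fun x => (w : ∀ _, ℂ) x) =
          fun x => 1 * ((lp.single 2 k (1:ℂ) : E ν) : ∀ _, ℂ) x + (-ck) * (u' : ∀ _, ℂ) x := by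
        funext x
        rw [hw, lp.coeFn_sub]
        simp only [Pi.sub_apply, lp.coeFn_smul, Pi.smul_apply, smul_eq_mul]
        ring
      rw [hfun, jact_comb, ← Jsingle_apply, heig' m, hW0, lp.coeFn_sub]
      simp only [Pi.sub_apply, lp.coeFn_smul, Pi.smul_apply, smul_eq_mul]
      ring
    have hortho : ⟪u', w⟫_ℂ = 0 := by
      rw [hw, inner_sub_right, inner_smul_right, hin_single, hin_u'u']; ring
    have h0 := key d lam u' hu'1 heig' hbd' w W hW hortho
    rw [hW0, inner_sub_right, inner_smul_right, inner_smul_right, hin_u'u',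
      inner_Jsingle] at h0
    have h1 := congrArg conj h0
    simp only [map_sub, map_add, map_sum, map_mul, map_one, map_zero, Complex.conj_conj,
      hck] at h1
    have hsum : ∑ j : Fin ν, ((u' : ∀ _, ℂ) (k - Pi.single j 1) + (u' : ∀ _, ℂ) (k + Pi.single j 1))
        = ∑ j : Fin ν, ((u' : ∀ _, ℂ) (k + Pi.single j 1) + (u' : ∀ _, ℂ) (k - Pi.single j 1)) :=
      Finset.sum_congr rfl (fun j _ => add_comm _ _)
    rw [hsum] at h1
    have h2 := heig' k
    rw [Jact] at h2
    linear_combination h2 - h1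
  have him : ∀ k, (u' : ∀ _, ℂ) k ≠ 0 → (d k).im = lam.im := by
    intro k hk
    have h2 : d k - conj (d k) = lam - conj lam := mul_right_cancel₀ hk (hkey k)
    rw [Complex.sub_conj, Complex.sub_conj] at h2
    have h3 : ((2 * (d k).im : ℝ) : ℂ) = ((2 * lam.im : ℝ) : ℂ) :=
      mul_right_cancel₀ Complex.I_ne_zero h2
    have h4 : 2 * (d k).im = 2 * lam.im := Complex.ofReal_inj.1 h3
    linarith
  by_contra him0
  have hε : (0:ℝ) < |lam.im| := abs_pos.2 him0
  obtain ⟨N, hN⟩ := hlim |lam.im| hε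
  have hsupp : ∀ k : Fin ν → ℤ, (N:ℤ) ≤ ∑ j, |k j| → (u' : ∀ _, ℂ) k = 0 := by
    intro k hk
    by_contra hk0
    have h := hN k hk
    rw [him k hk0] at h
    exact lt_irrefl _ h
  have hex : ∃ k, (u' : ∀ _, ℂ) k ≠ 0 := by
    by_contra h
    push_neg at h
    apply smul_ne_zero (r := ((‖u‖ : ℂ)⁻¹)) (inv_ne_zero (Complex.ofReal_ne_zero.2 hnu)) hu
    rw [← hu'_def]
    apply lp.ext
    funext k
    rw [lp.coeFn_zero]
    exact h k
  set S : Set (Fin ν → ℤ) := {k | (u' : ∀ _, ℂ) k ≠ 0} with hS_def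
  have hSsub : S ⊆ Set.Icc (fun _ => -(N:ℤ)) (fun _ => (N:ℤ)) := by
    intro k hk
    have hsum : ∑ j, |k j| ≤ (N:ℤ) := by
      by_contra h
      push_neg at h
      exact hk (hsupp k h.le)
    have habs : ∀ j, |k j| ≤ (N:ℤ) := fun j =>
      le_trans (Finset.single_le_sum (f := fun i => |k i|) (fun i _ => abs_nonneg _)
        (Finset.mem_univ j)) hsum
    exact ⟨fun j => (abs_le.1 (habs j)).1, fun j => (abs_le.1 (habs j)).2⟩
  have hSfin : S.Finite := (Set.finite_Icc _ _).subset hSsub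
  obtain ⟨k0, hk0⟩ := hex
  set j0 : Fin ν := ⟨0, hν⟩ with hj0
  set F := hSfin.toFinset with hF
  have hFne : F.Nonempty := ⟨k0, hSfin.mem_toFinset.2 hk0⟩
  set T := F.image (fun k => k j0) with hT
  have hTne : T.Nonempty := hFne.image _
  set M := T.max' hTne with hM
  obtain ⟨ks, hksF, hksM⟩ := Finset.mem_image.1 (T.max'_mem hTne)
  have hks : (u' : ∀ _, ℂ) ks ≠ 0 := hSfin.mem_toFinset.1 hksF
  have hzero : ∀ k : Fin ν → ℤ, M < k j0 → (u' : ∀ _, ℂ) k = 0 := by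
    intro k hk
    by_contra h
    exact absurd (Finset.le_max' T _ (Finset.mem_image_of_mem _ (hSfin.mem_toFinset.2 h))) (not_le.2 hk)
  set p : Fin ν → ℤ := ks + Pi.single j0 1 with hp
  have hpj0 : p j0 = M + 1 := by
    rw [hp, Pi.add_apply, Pi.single_eq_same, hksM]
  have hup : (u' : ∀ _, ℂ) p = 0 := hzero p (by rw [hpj0]; omega)
  have hplus : ∀ j, (u' : ∀ _, ℂ) (p + Pi.single j 1) = 0 := by
    intro j
    apply hzero
    rw [Pi.add_apply, hpj0, Pi.single_apply]
    split <;> omega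
  have hminus : ∀ j, j ≠ j0 → (u' : ∀ _, ℂ) (p - Pi.single j 1) = 0 := by
    intro j hj
    apply hzero
    rw [Pi.sub_apply, hpj0, Pi.single_apply, if_neg (by exact fun h => hj h.symm)]
    omega
  have hpk : p - Pi.single j0 1 = ks := by rw [hp]; abel
  have h2 := heig' p
  rw [Jact, Finset.sum_eq_single j0
    (fun j _ hj => by rw [hplus j, hminus j hj]; ring)
    (fun h => absurd (Finset.mem_univ j0) h)] at h2
  rw [hplus j0, hpk, hup] at h2
  simp only [zero_add, mul_zero, add_zero] at h2
  exact hks h2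

end S12

/-- If `Im(d k) → 0` as `‖k‖₁ → ∞`, then every eigenvalue of `J` lying on the
boundary of the numerical range of `J` is real. -/
theorem stmt12 {ν : ℕ} (hν : 1 ≤ ν) (d : (Fin ν → ℤ) → ℂ)
    (hd : ∃ C, ∀ k, ‖d k‖ ≤ C)
    (hlim : ∀ ε > 0, ∃ N : ℕ, ∀ k : Fin ν → ℤ,
      (N : ℤ) ≤ ∑ j, |k j| → |(d k).im| < ε)
    (lam : ℂ) (u : lp (fun _ : (Fin ν → ℤ) => ℂ) 2) (hu : u ≠ 0)
    (heig : ∀ k, Jact d (fun m => u m) k = lam * u k)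
    (hbd : lam ∈ frontier (numRangeJ d)) :
    lam.im = 0 :=
  S12.main hν d hlim lam u hu heig hbd
end

section
/- Let b₁ ≠ b₂ be real numbers and let d : ℤ → ℂ have Im(d(n)) = b₁ for n even and Im(d(n)) = b₂ for n odd. If u ∈ ℓ²(ℤ) satisfies u(n−1) + d(n)u(n) + u(n+1) = λu(n) for all n, and Im(d(n)) = Im(λ) for all n ∈ supp(u), then u = 0. -/
/-- Let `b₁ ≠ b₂` and let `d : ℤ → ℂ` satisfy `Im(d n) = b₁` for even `n` and
`Im(d n) = b₂` for odd `n`.  If `u ∈ ℓ²(ℤ)` satisfies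
`u(n−1) + d(n) u(n) + u(n+1) = λ u(n)` for all `n`, and `Im(d n) = Im λ` on
the support of `u`, then `u = 0`. -/
theorem stmt19 (b₁ b₂ : ℝ) (hb : b₁ ≠ b₂) (d : ℤ → ℂ)
    (halt : ∀ n : ℤ, (d n).im = if Even n then b₁ else b₂)
    (lam : ℂ) (u : lp (fun _ : ℤ => ℂ) 2)
    (heq : ∀ n : ℤ, u (n - 1) + d n * u n + u (n + 1) = lam * u n)
    (hsupp : ∀ n : ℤ, u n ≠ 0 → (d n).im = lam.im) :
    u = 0 := by
  by_contra h
  obtain ⟨n₀, hn₀⟩ : ∃ n, u n ≠ 0 := by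
    by_contra hc
    push_neg at hc
    exact h (by ext n; exact hc n)
  have hpar : ∀ m : ℤ, u m ≠ 0 → u (m + 1) = 0 := by
    intro m hm
    by_contra h1
    have e1 := hsupp m hm
    have e2 := hsupp (m + 1) h1
    rw [halt] at e1 e2
    rcases Int.even_or_odd m with he | ho
    · rw [if_pos he] at e1
      rw [if_neg (by simp [Int.even_add_one, he])] at e2
      exact hb (e1.trans e2.symm)
    · rw [if_neg (Int.not_even_iff_odd.2 ho)] at e1
      rw [if_pos (Int.even_add_one.2 (Int.not_even_iff_odd.2 ho))] at e2
      exact hb (e2.trans e1.symm)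
  have step : ∀ m : ℤ, u m ≠ 0 → u (m + 2) = -u m := by
    intro m hm
    have h1 := hpar m hm
    have h2 := heq (m + 1)
    rw [show m + 1 - 1 = m by ring, h1, show m + 1 + 1 = m + 2 by ring] at h2
    simp only [mul_zero, add_zero] at h2
    linear_combination h2
  have claim : ∀ k : ℕ, u (n₀ + 2 * k) ≠ 0 ∧ ‖u (n₀ + 2 * k)‖ = ‖u n₀‖ := by
    intro k
    induction k with
    | zero => simp [hn₀]
    | succ k ih =>
      have hstep := step _ ih.1
      have hc : (n₀ + 2 * ((k : ℤ) + 1)) = n₀ + 2 * k + 2 := by ring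
      push_cast
      rw [hc, hstep]
      simpa using ih
  have hmem : Memℓp (⇑u) 2 := lp.memℓp u
  have hs : Summable fun i : ℤ => ‖u i‖ ^ (2 : ℝ) := by
    simpa using hmem.summable (by norm_num)
  have ht := hs.tendsto_cofinite_zero
  have hnz : ‖u n₀‖ ≠ 0 := norm_ne_zero_iff.2 hn₀
  have hc : (0 : ℝ) < ‖u n₀‖ ^ (2 : ℝ) := by positivity
  have hfin : {i : ℤ | ¬ ‖u i‖ ^ (2 : ℝ) < ‖u n₀‖ ^ (2 : ℝ)}.Finite :=
    Filter.eventually_cofinite.mp (ht.eventually_lt_const hc)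
  have hinf : (Set.range (fun k : ℕ => n₀ + 2 * (k : ℤ))).Infinite :=
    Set.infinite_range_of_injective (fun a b hab => by omega)
  refine hinf (hfin.subset ?_)
  rintro _ ⟨k, rfl⟩
  simp only [Set.mem_setOf_eq, not_lt]
  rw [(claim k).2]
end
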